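/- Let (I, e, N, ᾱ, d) be a fusion algebra datum with a proper length function ℓ, and assume there are constants C, s > 0 such that ‖f · ξ‖₂ ≤ C·‖f‖_{2,s}·‖ξ‖₂ for all finitely supported f, ξ : I → ℂ (rapid decay). Let k be an integer with k > s. Then the set B := {f : I → ℂ finitely supported : f(e) = 0 and ∑_α ℓ(α)^{2k}·|f(α)|²·d(α)² ≤ 1} is totally bounded with respect to the metric (f, g) ↦ ‖f − g‖_op, where ‖h‖_op := sup{‖h · ξ‖₂ : ξ finitely supported with ‖ξ‖₂ ≤ 1} (which is finite for every finitely supported h). That is, for every ε > 0 there exists a finite subset G ⊆ B such that every f ∈ B satisfies ‖f − g‖_op ≤ ε for some g ∈ G. -/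

import Mathlib

/-- A fusion algebra datum on an index set `I`: a unit `e`, structure constants
`N`, a conjugation `bar`, and a dimension function `d`, satisfying finiteness
of fusion, the unit rules, Frobenius reciprocity and multiplicativity of `d`. -/
structure FusionData (I : Type*) where
  e : I
  N : I → I → I → ℕ
  bar : I → I
  d : I → ℝ
  N_fin : ∀ α β, (Function.support (N α β)).Finite
  bar_bar : ∀ α, bar (bar α) = α
  bar_e : bar e = e
  one_le_d : ∀ α, 1 ≤ d α
  d_bar : ∀ α, d (bar α) = d α
  N_unit_right : ∀ α, N α e α = 1
  N_unit_right' : ∀ α γ, γ ≠ α → N α e γ = 0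
  N_unit_left : ∀ α, N e α α = 1
  N_unit_left' : ∀ α γ, γ ≠ α → N e α γ = 0
  frob₁ : ∀ α β γ, N α β γ = N (bar α) γ β
  frob₂ : ∀ α β γ, N α β γ = N γ (bar β) α
  d_mul : ∀ α β, d α * d β = ∑ᶠ γ, (N α β γ : ℝ) * d γ

/-- A length function on a fusion algebra datum. -/
structure IsLength {I : Type*} (F : FusionData I) (ℓ : I → ℝ) : Prop where
  nonneg : ∀ α, 0 ≤ ℓ α
  map_e : ℓ F.e = 0
  map_bar : ∀ α, ℓ (F.bar α) = ℓ α
  subadd : ∀ α β γ, F.N α β γ ≠ 0 → ℓ γ ≤ ℓ α + ℓ β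

/-- A length function is proper if balls are finite and only `e` has length 0. -/
def IsProperLength {I : Type*} (F : FusionData I) (ℓ : I → ℝ) : Prop :=
  (∀ R : ℝ, 0 ≤ R → {α : I | ℓ α ≤ R}.Finite) ∧ ∀ α, ℓ α = 0 → α = F.e

/-- The fusion product `(f · ξ)(γ) = ∑_{α,β} f(α) ξ(β) N_{α,β}^γ`. -/
noncomputable def fmul {I : Type*} (F : FusionData I) (f ξ : I → ℂ) : I → ℂ :=
  fun γ => ∑ᶠ α, ∑ᶠ β, f α * ξ β * (F.N α β γ : ℂ)

/-- The weighted `ℓ²`-norm `‖ξ‖₂ = (∑_γ |ξ(γ)|² d(γ)²)^{1/2}`. -/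
noncomputable def norm2 {I : Type*} (F : FusionData I) (ξ : I → ℂ) : ℝ :=
  Real.sqrt (∑ᶠ γ, ‖ξ γ‖ ^ 2 * F.d γ ^ 2)


/-- The weighted norm `‖f‖_{2,s} = (∑_α |f(α)|² d(α)² (1+ℓ(α))^{2s})^{1/2}`. -/
noncomputable def norm2s {I : Type*} (F : FusionData I) (ℓ : I → ℝ) (s : ℝ)
    (f : I → ℂ) : ℝ :=
  Real.sqrt (∑ᶠ α, ‖f α‖ ^ 2 * F.d α ^ 2 * (1 + ℓ α) ^ (2 * s))

/-- The operator norm of left fusion multiplication by `h`. -/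
noncomputable def opNorm {I : Type*} (F : FusionData I) (h : I → ℂ) : ℝ :=
  ⨆ ξ : {ξ : I → ℂ // (Function.support ξ).Finite ∧ norm2 F ξ ≤ 1},
    norm2 F (fmul F h (ξ : I → ℂ))

private lemma opNorm_le_C_norm2s {I : Type*} (F : FusionData I) (ℓ : I → ℝ) (C s : ℝ)
    (hC : 0 < C)
    (hRD : ∀ f ξ : I → ℂ, (Function.support f).Finite → (Function.support ξ).Finite →
      norm2 F (fmul F f ξ) ≤ C * norm2s F ℓ s f * norm2 F ξ)
    (h : I → ℂ) (hh : (Function.support h).Finite) :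
    opNorm F h ≤ C * norm2s F ℓ s h := by
  have hne : Nonempty {ξ : I → ℂ // (Function.support ξ).Finite ∧ norm2 F ξ ≤ 1} :=
    ⟨⟨0, by simp, by simp [norm2]⟩⟩
  refine ciSup_le ?_
  rintro ⟨ξ, hξfin, hξle⟩
  have h2 : 0 ≤ C * norm2s F ℓ s h := mul_nonneg hC.le (Real.sqrt_nonneg _)
  calc norm2 F (fmul F h ξ) ≤ C * norm2s F ℓ s h * norm2 F ξ := hRD h ξ hh hξfin
    _ ≤ C * norm2s F ℓ s h * 1 := mul_le_mul_of_nonneg_left hξle h2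
    _ = C * norm2s F ℓ s h := mul_one _

private lemma tail_key (s : ℝ) (hs : 0 < s) (k : ℕ) (hk : s < (k:ℝ)) (R x : ℝ)
    (hR : 1 ≤ R) (hx : R < x) :
    (1 + x) ^ (2*s) ≤ ((2:ℝ)^(2*s) * R^(2*(s-(k:ℝ)))) * x ^ (2*k) := by
  have hR0 : (0:ℝ) < R := lt_of_lt_of_le one_pos hR
  have hx0 : (0:ℝ) < x := hR0.trans hx
  have h1 : (1+x)^(2*s) ≤ (2*x)^(2*s) :=
    Real.rpow_le_rpow (by linarith) (by linarith) (by positivity)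
  have h2 : (2*x)^(2*s) = (2:ℝ)^(2*s) * x^(2*s) := Real.mul_rpow (by norm_num) hx0.le
  have h3 : x^(2*s) = x^(2*(s-(k:ℝ))) * x^(((2*k : ℕ)):ℝ) := by
    rw [← Real.rpow_add hx0]
    congr 1
    push_cast
    ring
  have h4 : x^(2*(s-(k:ℝ))) ≤ R^(2*(s-(k:ℝ))) := by
    rw [show 2*(s-(k:ℝ)) = -(2*((k:ℝ)-s)) by ring, Real.rpow_neg hx0.le, Real.rpow_neg hR0.le]
    exact inv_anti₀ (Real.rpow_pos_of_pos hR0 _)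
      (Real.rpow_le_rpow hR0.le hx.le (by linarith))
  have h5 : x ^ (((2*k : ℕ)):ℝ) = x ^ (2*k) := Real.rpow_natCast x (2*k)
  have hxp : (0:ℝ) ≤ x ^ (2*k) := by positivity
  calc (1+x)^(2*s) ≤ (2:ℝ)^(2*s) * x^(2*s) := by rw [← h2]; exact h1
    _ = (2:ℝ)^(2*s) * (x^(2*(s-(k:ℝ))) * x ^ (2*k)) := by rw [h3, h5]
    _ ≤ (2:ℝ)^(2*s) * (R^(2*(s-(k:ℝ))) * x ^ (2*k)) := by
        have hp : (0:ℝ) ≤ (2:ℝ)^(2*s) := by positivity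
        exact mul_le_mul_of_nonneg_left (mul_le_mul_of_nonneg_right h4 hxp) hp
    _ = ((2:ℝ)^(2*s) * R^(2*(s-(k:ℝ)))) * x ^ (2*k) := by ring

private lemma choose_R (C s ε : ℝ) (hC : 0 < C) (hs : 0 < s) (hε : 0 < ε)
    (k : ℕ) (hk : s < (k:ℝ)) :
    ∃ R : ℝ, 1 ≤ R ∧ C * Real.sqrt ((2:ℝ)^(2*s) * R^(2*(s-(k:ℝ)))) ≤ ε/2 := by
  set t := (k:ℝ) - s with ht
  have ht0 : 0 < t := by simp only [ht]; linarith
  set M := max 1 (2*C*(2:ℝ)^s/ε) with hMdef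
  refine ⟨max 1 (M ^ (1/t)), le_max_left _ _, ?_⟩
  set R := max 1 (M ^ (1/t)) with hRdef
  have hR1 : 1 ≤ R := le_max_left _ _
  have hR0 : (0:ℝ) < R := lt_of_lt_of_le one_pos hR1
  have hM1 : 1 ≤ M := le_max_left _ _
  have hM0 : (0:ℝ) < M := lt_of_lt_of_le one_pos hM1
  have hMR : M ≤ R ^ t := by
    have h := Real.rpow_le_rpow (Real.rpow_nonneg hM0.le _) (le_max_right 1 (M ^ (1/t))) ht0.le
    rwa [← Real.rpow_mul hM0.le, one_div_mul_cancel ht0.ne', Real.rpow_one] at h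
  have e1 : ((2:ℝ)^s)^2 = (2:ℝ)^(2*s) := by
    rw [← Real.rpow_natCast ((2:ℝ)^s) 2, ← Real.rpow_mul (by norm_num : (0:ℝ) ≤ 2)]
    norm_num [mul_comm]
  have e2 : (R^(-t))^2 = R^(2*(s-(k:ℝ))) := by
    rw [← Real.rpow_natCast (R^(-t)) 2, ← Real.rpow_mul hR0.le]
    congr 1
    push_cast
    simp only [ht]
    ring
  have hsq : Real.sqrt ((2:ℝ)^(2*s) * R^(2*(s-(k:ℝ)))) = (2:ℝ)^s * R^(-t) := by
    rw [← e1, ← e2, ← mul_pow, Real.sqrt_sq (by positivity)]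
  rw [hsq, Real.rpow_neg hR0.le]
  have hRt : (0:ℝ) < R ^ t := Real.rpow_pos_of_pos hR0 t
  have key : 2*C*(2:ℝ)^s/ε ≤ R^t := le_trans (le_max_right _ _) hMR
  have key2 : 2*C*(2:ℝ)^s ≤ R^t * ε := by rwa [div_le_iff₀ hε] at key
  rw [show C * ((2:ℝ)^s * (R^t)⁻¹) = (C * (2:ℝ)^s) / R^t by ring, div_le_iff₀ hRt]
  nlinarith [key2, hε]

/-- Under rapid decay with exponent `s` and `k > s`, the unit
ball `B` of the seminorm `f ↦ (∑_α ℓ(α)^{2k} |f(α)|² d(α)²)^{1/2}` (intersected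
with `{f : f(e) = 0}`) is totally bounded for the operator-norm metric. -/
theorem stmt_12 {I : Type*} (F : FusionData I) (ℓ : I → ℝ) (hℓ : IsLength F ℓ)
    (hproper : IsProperLength F ℓ)
    (C s : ℝ) (hC : 0 < C) (hs : 0 < s)
    (hRD : ∀ f ξ : I → ℂ, (Function.support f).Finite →
      (Function.support ξ).Finite →
      norm2 F (fmul F f ξ) ≤ C * norm2s F ℓ s f * norm2 F ξ)
    (k : ℕ) (hk : s < (k : ℝ)) (ε : ℝ) (hε : 0 < ε) :
    ∃ G : Set (I → ℂ), G.Finite ∧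
      G ⊆ {f : I → ℂ | (Function.support f).Finite ∧ f F.e = 0 ∧
            ∑ᶠ α, ℓ α ^ (2 * k) * ‖f α‖ ^ 2 * F.d α ^ 2 ≤ 1} ∧
      ∀ f ∈ {f : I → ℂ | (Function.support f).Finite ∧ f F.e = 0 ∧
            ∑ᶠ α, ℓ α ^ (2 * k) * ‖f α‖ ^ 2 * F.d α ^ 2 ≤ 1},
        ∃ g ∈ G, opNorm F (f - g) ≤ ε := by
  classical
  obtain ⟨hball, hzero⟩ := hproper
  obtain ⟨R, hR1, hCK⟩ := choose_R C s ε hC hs hε k hk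
  have hR0 : (0:ℝ) < R := lt_of_lt_of_le one_pos hR1
  set K : ℝ := (2:ℝ)^(2*s) * R^(2*(s-(k:ℝ))) with hKdef
  have hK0 : 0 ≤ K := by positivity
  have hS : {α : I | ℓ α ≤ R}.Finite := hball R (by linarith)
  set T : Finset I := hS.toFinset with hTdef
  have hmemT : ∀ α, α ∈ T ↔ ℓ α ≤ R := fun α => by
    simp [hTdef, Set.Finite.mem_toFinset]
  have hkne : k ≠ 0 := by
    rintro rfl
    simp only [Nat.cast_zero] at hk
    linarith
  set B := {f : I → ℂ | (Function.support f).Finite ∧ f F.e = 0 ∧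
      ∑ᶠ α, ℓ α ^ (2 * k) * ‖f α‖ ^ 2 * F.d α ^ 2 ≤ 1} with hBdef
  -- support of the term functions
  have hsupp_term : ∀ g : I → ℂ,
      (Function.support fun α => ℓ α ^ (2*k) * ‖g α‖^2 * F.d α^2) ⊆ Function.support g := by
    intro g α hα
    rw [Function.mem_support] at hα ⊢
    intro h
    rw [h] at hα
    simp at hα
  -- coordinate bound
  set c : I → ℝ := fun α => (ℓ α ^ k * F.d α)⁻¹ with hc
  have hcoord : ∀ f ∈ B, ∀ α, ‖f α‖ ≤ c α := by
    intro f hf α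
    obtain ⟨hffin, hfe, hfsum⟩ := hf
    rcases eq_or_lt_of_le (hℓ.nonneg α) with h0 | h0
    · have hα : α = F.e := hzero α h0.symm
      rw [hα, hfe]
      simp [hc, hℓ.map_e, zero_pow hkne]
    · have hterm : ℓ α ^ (2*k) * ‖f α‖^2 * F.d α^2 ≤ 1 := by
        refine le_trans (single_le_finsum α (Set.Finite.subset hffin (hsupp_term f)) ?_) hfsum
        intro j
        exact mul_nonneg (mul_nonneg (pow_nonneg (hℓ.nonneg j) _) (pow_nonneg (norm_nonneg _) 2))
          (sq_nonneg _)
      have hd : (0:ℝ) < F.d α := lt_of_lt_of_le one_pos (F.one_le_d α)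
      have hℓk : (0:ℝ) < ℓ α ^ k * F.d α := by positivity
      have hpm : ℓ α ^ (2*k) = (ℓ α ^ k)^2 := by rw [← pow_mul, mul_comm]
      rw [hpm] at hterm
      show ‖f α‖ ≤ (ℓ α ^ k * F.d α)⁻¹
      rw [inv_eq_one_div, le_div_iff₀ hℓk]
      nlinarith [norm_nonneg (f α), hℓk.le, sq_nonneg (‖f α‖ * (ℓ α ^ k * F.d α) - 1)]
  -- finite-dimensional part
  set φ : (↑T → ℂ) → (I → ℂ) := fun u α => if h : α ∈ T then u ⟨α, h⟩ else 0 with hφ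
  set ψ : (I → ℂ) → (↑T → ℂ) := fun f x => f ↑x with hψ
  set V : Set (I → ℂ) := {f | f ∈ B ∧ Function.support f ⊆ ↑T} with hV
  have hφψ : ∀ f : I → ℂ, Function.support f ⊆ ↑T → φ (ψ f) = f := by
    intro f hsupp
    funext α
    simp only [hφ, hψ]
    split_ifs with h
    · rfl
    · by_contra hne
      exact h (Finset.mem_coe.mp (hsupp (Function.mem_support.mpr fun hh => hne hh.symm)))
  have hQc : IsCompact (Set.univ.pi fun x : ↑T => Metric.closedBall (0:ℂ) (c ↑x)) :=
    isCompact_univ_pi fun x => isCompact_closedBall _ _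
  have hKV : (ψ '' V) ⊆ Set.univ.pi fun x : ↑T => Metric.closedBall (0:ℂ) (c ↑x) := by
    rintro _ ⟨f, ⟨hfB, hfs⟩, rfl⟩
    intro x _
    simp only [Metric.mem_closedBall, dist_zero_right, hψ]
    exact hcoord f hfB ↑x
  have htb : TotallyBounded (ψ '' V) := hQc.totallyBounded.subset hKV
  set W : ℝ := ∑ γ ∈ T, F.d γ ^ 2 * (1 + ℓ γ) ^ (2*s) with hW
  have hwt : ∀ γ : I, (0:ℝ) ≤ F.d γ ^ 2 * (1 + ℓ γ) ^ (2*s) := fun γ =>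
    mul_nonneg (sq_nonneg _) (Real.rpow_nonneg (by linarith [hℓ.nonneg γ]) _)
  have hW0 : 0 ≤ W := Finset.sum_nonneg fun γ _ => hwt γ
  set W' : ℝ := W + 1 with hW'
  have hW'1 : (1:ℝ) ≤ W' := by simp only [hW']; linarith
  have hsW' : (1:ℝ) ≤ Real.sqrt W' := by
    rw [show (1:ℝ) = Real.sqrt 1 by simp]
    exact Real.sqrt_le_sqrt hW'1
  have hsW'0 : (0:ℝ) < Real.sqrt W' := lt_of_lt_of_le one_pos hsW'
  set δ : ℝ := ε / (2 * C * Real.sqrt W') with hδ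
  have hδ0 : 0 < δ := by positivity
  obtain ⟨t, htsub, htfin, htcov⟩ :=
    totallyBounded_iff_subset.mp htb _ (Metric.dist_mem_uniformity hδ0)
  refine ⟨φ '' t, htfin.image φ, ?_, ?_⟩
  · rintro _ ⟨y, hyt, rfl⟩
    obtain ⟨f', hf'V, rfl⟩ := htsub hyt
    rw [hφψ f' hf'V.2]
    exact hf'V.1
  · intro f hf
    obtain ⟨hffin, hfe, hfsum⟩ := hf
    set fR : I → ℂ := fun α => if α ∈ T then f α else 0 with hfRdef
    have hfRsupp : Function.support fR ⊆ ↑T := by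
      intro α hα
      rw [Function.mem_support] at hα
      rw [Finset.mem_coe]
      by_contra h
      simp only [hfRdef, if_neg h] at hα
      exact hα rfl
    have hfRle : ∀ α, ‖fR α‖ ≤ ‖f α‖ := by
      intro α
      simp only [hfRdef]
      split_ifs <;> simp
    have hfRf : Function.support fR ⊆ Function.support f := by
      intro α hα
      rw [Function.mem_support] at hα ⊢
      intro h
      apply hα
      simp [hfRdef, h]
    have hfRB : fR ∈ B := by
      refine ⟨T.finite_toSet.subset hfRsupp, ?_, ?_⟩
      · have heT : F.e ∈ T := (hmemT F.e).mpr (by rw [hℓ.map_e]; linarith)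
        simp only [hfRdef, if_pos heT]
        exact hfe
      · have hs1 : (Function.support fun α => ℓ α ^ (2*k) * ‖fR α‖^2 * F.d α^2)
            ⊆ ↑hffin.toFinset := by
          refine subset_trans (hsupp_term fR) (subset_trans hfRf ?_)
          rw [Set.Finite.coe_toFinset]
        have hs2 : (Function.support fun α => ℓ α ^ (2*k) * ‖f α‖^2 * F.d α^2)
            ⊆ ↑hffin.toFinset := by
          refine subset_trans (hsupp_term f) ?_
          rw [Set.Finite.coe_toFinset]
        rw [finsum_eq_sum_of_support_subset _ hs1]
        calc ∑ α ∈ hffin.toFinset, ℓ α ^ (2*k) * ‖fR α‖^2 * F.d α^2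
            ≤ ∑ α ∈ hffin.toFinset, ℓ α ^ (2*k) * ‖f α‖^2 * F.d α^2 := by
              refine Finset.sum_le_sum fun α _ => ?_
              have h2 : ‖fR α‖^2 ≤ ‖f α‖^2 :=
                pow_le_pow_left₀ (norm_nonneg _) (hfRle α) 2
              exact mul_le_mul_of_nonneg_right
                (mul_le_mul_of_nonneg_left h2 (pow_nonneg (hℓ.nonneg α) _)) (sq_nonneg _)
          _ = ∑ᶠ α, ℓ α ^ (2*k) * ‖f α‖^2 * F.d α^2 :=
              (finsum_eq_sum_of_support_subset _ hs2).symm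
          _ ≤ 1 := hfsum
    have hmem := htcov ⟨fR, ⟨hfRB, hfRsupp⟩, rfl⟩
    simp only [Set.mem_iUnion, Set.mem_setOf_eq, exists_prop] at hmem
    obtain ⟨y, hyt, hdist⟩ := hmem
    obtain ⟨f', hf'V, hyf'⟩ := htsub hyt
    have hgeq : φ y = f' := by rw [← hyf', hφψ f' hf'V.2]
    have hgB : φ y ∈ B := by rw [hgeq]; exact hf'V.1
    have hgsupp : Function.support (φ y) ⊆ ↑T := by rw [hgeq]; exact hf'V.2
    refine ⟨φ y, ⟨y, hyt, rfl⟩, ?_⟩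
    have hgfin : (Function.support (φ y)).Finite := hgB.1
    have hdiff_fin : (Function.support (f - φ y)).Finite :=
      Set.Finite.subset (hffin.union hgfin) (Function.support_sub f (φ y))
    have hop := opNorm_le_C_norm2s F ℓ C s hC hRD (f - φ y) hdiff_fin
    set U : Finset I := (hffin.toFinset ∪ hgfin.toFinset) ∪ T with hU
    have hterm_supp : (Function.support fun γ => ‖(f - φ y) γ‖^2 * F.d γ^2 * (1 + ℓ γ)^(2*s))
        ⊆ ↑U := by
      intro γ hγ
      rw [Function.mem_support] at hγ
      have hγ' : (f - φ y) γ ≠ 0 := by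
        intro h
        rw [h] at hγ
        simp at hγ
      have := Function.support_sub f (φ y) (Function.mem_support.mpr hγ')
      rw [hU]
      push_cast [Finset.coe_union]
      rcases this with h | h
      · exact Or.inl (Or.inl (by rwa [Set.Finite.coe_toFinset]))
      · exact Or.inl (Or.inr (by rwa [Set.Finite.coe_toFinset]))
    have hsum_eq : ∑ᶠ γ, ‖(f - φ y) γ‖^2 * F.d γ^2 * (1 + ℓ γ)^(2*s)
        = ∑ γ ∈ U, ‖(f - φ y) γ‖^2 * F.d γ^2 * (1 + ℓ γ)^(2*s) :=
      finsum_eq_sum_of_support_subset _ hterm_supp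
    have hsplit := Finset.sum_filter_add_sum_filter_not U (· ∈ T)
      (fun γ => ‖(f - φ y) γ‖^2 * F.d γ^2 * (1 + ℓ γ)^(2*s))
    have hpart1 : ∑ γ ∈ U.filter (· ∈ T), ‖(f - φ y) γ‖^2 * F.d γ^2 * (1 + ℓ γ)^(2*s)
        ≤ δ^2 * W' := by
      have step : ∀ γ ∈ U.filter (· ∈ T),
          ‖(f - φ y) γ‖^2 * F.d γ^2 * (1 + ℓ γ)^(2*s)
            ≤ δ^2 * (F.d γ^2 * (1 + ℓ γ)^(2*s)) := by
        intro γ hγ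
        have hγT : γ ∈ T := (Finset.mem_filter.mp hγ).2
        have hco : (f - φ y) γ = ψ fR ⟨γ, hγT⟩ - y ⟨γ, hγT⟩ := by
          simp only [Pi.sub_apply, hψ, hφ, hfRdef, dif_pos hγT, if_pos hγT]
        have hb : ‖(f - φ y) γ‖ ≤ δ := by
          rw [hco, ← dist_eq_norm]
          exact le_of_lt (lt_of_le_of_lt (dist_le_pi_dist (ψ fR) y ⟨γ, hγT⟩) hdist)
        have h1 : ‖(f - φ y) γ‖^2 ≤ δ^2 := pow_le_pow_left₀ (norm_nonneg _) hb 2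
        calc ‖(f - φ y) γ‖^2 * F.d γ^2 * (1 + ℓ γ)^(2*s)
            = ‖(f - φ y) γ‖^2 * (F.d γ^2 * (1 + ℓ γ)^(2*s)) := by ring
          _ ≤ δ^2 * (F.d γ^2 * (1 + ℓ γ)^(2*s)) := mul_le_mul_of_nonneg_right h1 (hwt γ)
      calc ∑ γ ∈ U.filter (· ∈ T), ‖(f - φ y) γ‖^2 * F.d γ^2 * (1 + ℓ γ)^(2*s)
          ≤ ∑ γ ∈ U.filter (· ∈ T), δ^2 * (F.d γ^2 * (1 + ℓ γ)^(2*s)) :=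
            Finset.sum_le_sum step
        _ ≤ ∑ γ ∈ T, δ^2 * (F.d γ^2 * (1 + ℓ γ)^(2*s)) :=
            Finset.sum_le_sum_of_subset_of_nonneg
              (fun γ hγ => (Finset.mem_filter.mp hγ).2)
              (fun γ _ _ => mul_nonneg (sq_nonneg δ) (hwt γ))
        _ = δ^2 * W := by rw [hW, Finset.mul_sum]
        _ ≤ δ^2 * W' := mul_le_mul_of_nonneg_left (by simp only [hW']; linarith) (sq_nonneg δ)
    have hpart2 : ∑ γ ∈ U.filter (fun γ => ¬ γ ∈ T),
        ‖(f - φ y) γ‖^2 * F.d γ^2 * (1 + ℓ γ)^(2*s) ≤ K := by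
      have hnn : ∀ γ : I, (0:ℝ) ≤ ℓ γ ^ (2*k) * ‖f γ‖^2 * F.d γ^2 := fun γ =>
        mul_nonneg (mul_nonneg (pow_nonneg (hℓ.nonneg γ) _) (pow_nonneg (norm_nonneg _) 2))
          (sq_nonneg _)
      have step : ∀ γ ∈ U.filter (fun γ => ¬ γ ∈ T),
          ‖(f - φ y) γ‖^2 * F.d γ^2 * (1 + ℓ γ)^(2*s)
            ≤ K * (ℓ γ ^ (2*k) * ‖f γ‖^2 * F.d γ^2) := by
        intro γ hγ
        have hγT : γ ∉ T := (Finset.mem_filter.mp hγ).2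
        have hgz : φ y γ = 0 := by
          by_contra h
          exact hγT (Finset.mem_coe.mp (hgsupp (Function.mem_support.mpr h)))
        have hfg : (f - φ y) γ = f γ := by simp [hgz]
        have hℓγ : R < ℓ γ := lt_of_not_ge fun h => hγT ((hmemT γ).mpr h)
        have hkey := tail_key s hs k hk R (ℓ γ) hR1 hℓγ
        rw [hfg]
        calc ‖f γ‖^2 * F.d γ^2 * (1 + ℓ γ)^(2*s)
            ≤ ‖f γ‖^2 * F.d γ^2 * (K * ℓ γ ^ (2*k)) :=
              mul_le_mul_of_nonneg_left hkey (by positivity)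
          _ = K * (ℓ γ ^ (2*k) * ‖f γ‖^2 * F.d γ^2) := by ring
      have hsu : (Function.support fun γ => ℓ γ ^ (2*k) * ‖f γ‖^2 * F.d γ^2) ⊆ ↑U := by
        refine subset_trans (hsupp_term f) ?_
        intro γ hγ
        rw [hU]
        push_cast [Finset.coe_union]
        exact Or.inl (Or.inl (by rwa [Set.Finite.coe_toFinset]))
      calc ∑ γ ∈ U.filter (fun γ => ¬ γ ∈ T), ‖(f - φ y) γ‖^2 * F.d γ^2 * (1 + ℓ γ)^(2*s)
          ≤ ∑ γ ∈ U.filter (fun γ => ¬ γ ∈ T), K * (ℓ γ ^ (2*k) * ‖f γ‖^2 * F.d γ^2) :=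
            Finset.sum_le_sum step
        _ ≤ ∑ γ ∈ U, K * (ℓ γ ^ (2*k) * ‖f γ‖^2 * F.d γ^2) :=
            Finset.sum_le_sum_of_subset_of_nonneg (Finset.filter_subset _ _)
              (fun γ _ _ => mul_nonneg hK0 (hnn γ))
        _ = K * ∑ γ ∈ U, ℓ γ ^ (2*k) * ‖f γ‖^2 * F.d γ^2 := (Finset.mul_sum _ _ _).symm
        _ ≤ K * 1 := by
            refine mul_le_mul_of_nonneg_left ?_ hK0
            rw [← finsum_eq_sum_of_support_subset _ hsu]
            exact hfsum
        _ = K := mul_one K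
    have htot : ∑ᶠ γ, ‖(f - φ y) γ‖^2 * F.d γ^2 * (1 + ℓ γ)^(2*s) ≤ δ^2 * W' + K := by
      rw [hsum_eq, ← hsplit]
      exact add_le_add hpart1 hpart2
    have ha : (0:ℝ) ≤ δ^2 * W' := mul_nonneg (sq_nonneg δ) (by linarith)
    have hns : norm2s F ℓ s (f - φ y) ≤ δ * Real.sqrt W' + Real.sqrt K := by
      have hsq2 : δ^2 * W' + K ≤ (Real.sqrt (δ^2 * W') + Real.sqrt K)^2 := by
        nlinarith [Real.sq_sqrt ha, Real.sq_sqrt hK0, Real.sqrt_nonneg (δ^2 * W'),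
          Real.sqrt_nonneg K, mul_nonneg (Real.sqrt_nonneg (δ^2 * W')) (Real.sqrt_nonneg K)]
      have h1 : norm2s F ℓ s (f - φ y) ≤ Real.sqrt ((Real.sqrt (δ^2 * W') + Real.sqrt K)^2) := by
        unfold norm2s
        exact Real.sqrt_le_sqrt (le_trans htot hsq2)
      rw [Real.sqrt_sq (by positivity)] at h1
      have h2 : Real.sqrt (δ^2 * W') = δ * Real.sqrt W' := by
        rw [Real.sqrt_mul (sq_nonneg δ), Real.sqrt_sq hδ0.le]
      rw [h2] at h1
      exact h1
    have hCδ : C * δ * Real.sqrt W' = ε / 2 := by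
      rw [hδ]
      field_simp
    calc opNorm F (f - φ y) ≤ C * norm2s F ℓ s (f - φ y) := hop
      _ ≤ C * (δ * Real.sqrt W' + Real.sqrt K) := mul_le_mul_of_nonneg_left hns hC.le
      _ = C * δ * Real.sqrt W' + C * Real.sqrt K := by ring
      _ ≤ ε/2 + ε/2 := by
          rw [hCδ]
          exact add_le_add le_rfl hCK
      _ = ε := by ring
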